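/- For every unit quaternion q and every real r ≥ 0, sSup { ‖q * v * (star q) − v‖ : v a pure quaternion with ‖v‖ ≤ r } = 2 · ‖Im q‖ · r; that is, the maximal displacement D(R_q) of the rotation R_q over the ball of radius r equals 2|Im q| r. -/

import Mathlib

open Quaternion

/-- The key norm computation: for a unit quaternion `q` and pure `v`,
`‖q * v * star q - v‖ = ‖q.im * v - v * q.im‖`. -/
lemma disp_eq (q : Quaternion ℝ) (hq : ‖q‖ = 1) (v : Quaternion ℝ) :
    ‖q * v * star q - v‖ = ‖q.im * v - v * q.im‖ := by
  have hqs : q * star q = 1 := by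
    rw [Quaternion.self_mul_star, Quaternion.normSq_eq_norm_mul_self, hq]
    norm_num
  have h1 : q * v * star q - v = (q * v - v * q) * star q := by
    rw [sub_mul, mul_assoc v q (star q), hqs, mul_one]
  have h2 : q * v - v * q = q.im * v - v * q.im := by
    have him : q.im = q - (q.re : Quaternion ℝ) := eq_sub_of_add_eq' q.re_add_im
    rw [him, sub_mul, mul_sub, Quaternion.coe_mul_eq_smul, Quaternion.mul_coe_eq_smul]
    abel
  rw [h1, norm_mul, Quaternion.norm_star, hq, mul_one, h2]

lemma star_pure {v : Quaternion ℝ} (hv : v.re = 0) : star v = -v :=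
  Quaternion.star_eq_neg.2 hv

/-- For every unit quaternion `q` and `r ≥ 0`, the maximal displacement of the rotation
`R_q` over the ball of radius `r` equals `2 * ‖Im q‖ * r`. -/
theorem sSup_displacement_eq_two_norm_im_mul
    (q : Quaternion ℝ) (hq : ‖q‖ = 1) (r : ℝ) (hr : 0 ≤ r) :
    sSup { x : ℝ | ∃ v : Quaternion ℝ, v.re = 0 ∧ ‖v‖ ≤ r ∧
        x = ‖q * v * star q - v‖ } = 2 * ‖q.im‖ * r := by
  set S := { x : ℝ | ∃ v : Quaternion ℝ, v.re = 0 ∧ ‖v‖ ≤ r ∧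
      x = ‖q * v * star q - v‖ } with hS
  -- upper bound
  have hub : ∀ x ∈ S, x ≤ 2 * ‖q.im‖ * r := by
    rintro x ⟨v, hv0, hvr, rfl⟩
    rw [disp_eq q hq v]
    calc ‖q.im * v - v * q.im‖ ≤ ‖q.im * v‖ + ‖v * q.im‖ := norm_sub_le _ _
      _ = 2 * (‖q.im‖ * ‖v‖) := by rw [norm_mul, norm_mul]; ring
      _ ≤ 2 * (‖q.im‖ * r) := by
          have := mul_le_mul_of_nonneg_left hvr (norm_nonneg q.im)
          linarith
      _ = 2 * ‖q.im‖ * r := by ring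
  -- the witness
  set v0 : Quaternion ℝ :=
    if h : q.imI = 0 ∧ q.imK = 0 then ⟨0, 1, 0, 0⟩ else ⟨0, q.imK, 0, -q.imI⟩ with hv0def
  have hv0c : v0.re = 0 ∧ v0.imJ = 0 ∧ ((q.imI = 0 ∧ q.imK = 0 ∧ v0.imI = 1 ∧ v0.imK = 0) ∨
      (¬(q.imI = 0 ∧ q.imK = 0) ∧ v0.imI = q.imK ∧ v0.imK = -q.imI)) := by
    by_cases h : q.imI = 0 ∧ q.imK = 0
    · have e : v0 = ⟨0, 1, 0, 0⟩ := dif_pos h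
      rw [e]; exact ⟨rfl, rfl, Or.inl ⟨h.1, h.2, rfl, rfl⟩⟩
    · have e : v0 = ⟨0, q.imK, 0, -q.imI⟩ := dif_neg h
      rw [e]; exact ⟨rfl, rfl, Or.inr ⟨h, rfl, rfl⟩⟩
  have hv0re : v0.re = 0 := hv0c.1
  have hv0ne : v0 ≠ 0 := by
    intro hcon
    rcases hv0c with ⟨_, _, ⟨_, _, h1, _⟩ | ⟨h, h1, h2⟩⟩
    · rw [hcon] at h1; change (0:ℝ) = 1 at h1; norm_num at h1
    · apply h
      rw [hcon] at h1 h2; change (0:ℝ) = q.imK at h1; change (0:ℝ) = -q.imI at h2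
      constructor <;> linarith
  have horth : (q.im * v0).re = 0 := by
    obtain ⟨h0, hj, hc⟩ := hv0c
    rcases hc with ⟨a, b, c, d⟩ | ⟨_, c, d⟩
    · simp [Quaternion.re_mul, h0, hj, a, b, c, d]
    · simp [Quaternion.re_mul, h0, hj, c, d]; ring
  set v : Quaternion ℝ := (r / ‖v0‖) • v0 with hvdef
  have hv0norm : ‖v0‖ ≠ 0 := norm_ne_zero_iff.2 hv0ne
  have hvre : v.re = 0 := by rw [hvdef, Quaternion.re_smul, hv0re, smul_zero]
  have hvnorm : ‖v‖ = r := by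
    rw [hvdef, norm_smul, Real.norm_eq_abs, abs_div, abs_of_nonneg hr,
      abs_of_nonneg (norm_nonneg v0), div_mul_cancel₀ _ hv0norm]
  have hanti : v * q.im = -(q.im * v) := by
    have h1 : v * q.im = star (q.im * v) := by
      rw [star_mul, star_pure hvre, star_pure q.re_im, neg_mul_neg]
    have h2 : q.im * v + star (q.im * v) = ((2 * (q.im * v).re : ℝ) : Quaternion ℝ) :=
      Quaternion.self_add_star' _
    have horthv : (q.im * v).re = 0 := by
      rw [hvdef, mul_smul_comm, Quaternion.re_smul, horth, smul_zero]
    rw [horthv] at h2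
    simp only [mul_zero, Quaternion.coe_zero] at h2
    rw [h1]; exact eq_neg_of_add_eq_zero_right h2
  have hmem : 2 * ‖q.im‖ * r ∈ S := by
    refine ⟨v, hvre, le_of_eq hvnorm, ?_⟩
    rw [disp_eq q hq v, hanti, sub_neg_eq_add, ← two_smul ℝ (q.im * v), norm_smul,
      norm_mul, hvnorm]
    simp [Real.norm_eq_abs]
    ring
  refine le_antisymm (Real.sSup_le hub ?_) (le_csSup ⟨_, hub⟩ hmem)
  positivity
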